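/- arXiv:2411.02977 — 2 statements merged into one kernel-verified Lean document; each statement's English description precedes it below -/
import Mathlib

section
/- For a finite LTS with silent actions, the branching apartness relation #_b is the complement of branching bisimilarity: x #_b y if and only if x and y are not branching bisimilar. -/
/-- `x ⟹ x'`: a (possibly empty) sequence of `τ`-steps from `x` to `x'`. -/
def TauStar {X A : Type} (tr : X → A → X → Prop) (τ : A) : X → X → Prop :=
  Relation.ReflTransGen (fun u v => tr u τ v)

/-- `x →(α) x'`: either `x →α x'`, or `α = τ` and `x = x'`. -/
def TrOpt {X A : Type} (tr : X → A → X → Prop) (τ : A) (x : X) (α : A) (x' : X) : Prop :=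
  tr x α x' ∨ (α = τ ∧ x = x')

/-- A symmetric relation `R` is a branching bisimulation. -/
def IsBranchingBisim {X A : Type} (tr : X → A → X → Prop) (τ : A)
    (R : X → X → Prop) : Prop :=
  Symmetric R ∧ ∀ x y, R x y → ∀ α x', tr x α x' →
    ∃ y' y'', TauStar tr τ y y' ∧ TrOpt tr τ y' α y'' ∧ R x y' ∧ R x' y''

/-- Branching bisimilarity: the union of all branching bisimulations. -/
def BranchingBisimilar {X A : Type} (tr : X → A → X → Prop) (τ : A) (x y : X) : Prop :=
  ∃ R, IsBranchingBisim tr τ R ∧ R x y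

/-- A symmetric relation `R` is a branching apartness relation. -/
def IsBranchingApartnessRel {X A : Type} (tr : X → A → X → Prop) (τ : A)
    (R : X → X → Prop) : Prop :=
  Symmetric R ∧ ∀ x y α x', tr x α x' →
    (∀ y' y'', TauStar tr τ y y' → TrOpt tr τ y' α y'' → (R x y' ∨ R x' y'')) →
    R x y

/-- Branching apartness: the intersection of all branching apartness relations. -/
def BranchingApart {X A : Type} (tr : X → A → X → Prop) (τ : A) (x y : X) : Prop :=
  ∀ R, IsBranchingApartnessRel tr τ R → R x y

/-- Branching bisimilarity is itself a branching bisimulation. -/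
lemma bisimilar_isBisim {X A : Type} (tr : X → A → X → Prop) (τ : A) :
    IsBranchingBisim tr τ (BranchingBisimilar tr τ) := by
  constructor
  · rintro a b ⟨R, hR, hab⟩
    exact ⟨R, hR, hR.1 hab⟩
  · rintro a b ⟨R, hR, hab⟩ α a' ha
    obtain ⟨b', b'', h1, h2, h3, h4⟩ := hR.2 a b hab α a' ha
    exact ⟨b', b'', h1, h2, ⟨R, hR, h3⟩, ⟨R, hR, h4⟩⟩

/-- The complement of bisimilarity is a branching apartness relation. -/
lemma not_bisim_apartnessRel {X A : Type} (tr : X → A → X → Prop) (τ : A) :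
    IsBranchingApartnessRel tr τ (fun a b => ¬ BranchingBisimilar tr τ a b) := by
  constructor
  · intro a b hab hba
    exact hab ((bisimilar_isBisim tr τ).1 hba)
  · intro a b α a' ha hcl hbis
    obtain ⟨b', b'', h1, h2, h3, h4⟩ := (bisimilar_isBisim tr τ).2 a b hbis α a' ha
    rcases hcl b' b'' h1 h2 with h | h
    · exact h h3
    · exact h h4

/-- For a finite LTS, branching apartness is the complement of branching bisimilarity. -/
theorem branchingApart_iff_not_branchingBisimilar {X A : Type} [Finite X]
    (tr : X → A → X → Prop) (τ : A) (x y : X) :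
    BranchingApart tr τ x y ↔ ¬ BranchingBisimilar tr τ x y := by
  constructor
  · intro h
    exact h _ (not_bisim_apartnessRel tr τ)
  · intro hnb
    by_contra hna
    apply hnb
    refine ⟨fun a b => ¬ BranchingApart tr τ a b, ⟨?_, ?_⟩, hna⟩
    · intro a b hab hba
      apply hab
      intro R hR
      exact hR.1 (hba R hR)
    · intro a b hab α a' ha
      by_contra hno
      push_neg at hno
      apply hab
      intro R hR
      apply hR.2 a b α a' ha
      intro b' b'' h1 h2
      by_cases hc : BranchingApart tr τ a b'
      · left; exact hc R hR
      · right; exact (hno b' b'' h1 h2 hc) R hR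
end

section
/- For a finite LTS, x and y are branching apart if and only if [x,y] is winning for Spoiler in the branching bisimulation game. -/
/-- A step of a play that is consistent with the positional strategy `π` of the
player owning the configurations satisfying `own`. -/
def ConsStep {C : Type} (move : C → C → Prop) (own : C → Prop) (π : C → C)
    (c c' : C) : Prop :=
  move c c' ∧ (own c → c' = π c)

/-- A positional strategy is valid if it picks an actual move whenever one exists. -/
def ValidStrat {C : Type} (move : C → C → Prop) (own : C → Prop) (π : C → C) : Prop :=
  ∀ c, own c → (∃ c', move c c') → move c (π c)

/-- `c :: l` is a maximal finite play w.r.t. the step relation `R`: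
it is a chain of `R`-steps that cannot be extended. -/
def MaxFinPlay {C : Type} (R : C → C → Prop) (c : C) (l : List C) : Prop :=
  List.Chain R c l ∧ ∀ c', ¬ R ((c :: l).getLast (List.cons_ne_nil c l)) c'

/-- An infinite play from `c` consistent with the strategy. -/
def InfPlay {C : Type} (R : C → C → Prop) (c : C) (f : ℕ → C) : Prop :=
  f 0 = c ∧ ∀ i, R (f i) (f (i + 1))

/-- The positional Spoiler strategy `π` is winning from configuration `c`:
it is valid, admits no infinite consistent play from `c` (those are won by Duplicator),
and every maximal finite consistent play from `c` ends in a (stuck) configuration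
owned by Duplicator. Here `isS c` says that `c` is a Spoiler configuration. -/
def SpoilerWinsFrom {C : Type} (move : C → C → Prop) (isS : C → Prop) (π : C → C)
    (c : C) : Prop :=
  ValidStrat move isS π ∧
  (∀ f, ¬ InfPlay (ConsStep move isS π) c f) ∧
  (∀ l, MaxFinPlay (ConsStep move isS π) c l →
      ¬ isS ((c :: l).getLast (List.cons_ne_nil c l)))

/-- The positional Duplicator strategy `ρ` is winning from configuration `c`:
it is valid and every maximal finite consistent play from `c` ends in a (stuck)
configuration owned by Spoiler; infinite plays are won by Duplicator anyway. -/
def DuplicatorWinsFrom {C : Type} (move : C → C → Prop) (isS : C → Prop) (ρ : C → C)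
    (c : C) : Prop :=
  ValidStrat move (fun c => ¬ isS c) ρ ∧
  (∀ l, MaxFinPlay (ConsStep move (fun c => ¬ isS c) ρ) c l →
      isS ((c :: l).getLast (List.cons_ne_nil c l)))

/-- The moves of an alternating two-player game with Spoiler configurations `CS`,
Duplicator configurations `CD` (the configurations are `CS ⊕ CD`), Spoiler moves
`mS` and Duplicator moves `mD`. -/
def AltMove {CS CD : Type} (mS : CS → CD → Prop) (mD : CD → CS → Prop) :
    CS ⊕ CD → CS ⊕ CD → Prop
  | Sum.inl s, Sum.inr d => mS s d
  | Sum.inr d, Sum.inl s => mD d s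
  | _, _ => False

/-- Spoiler configurations of the alternating game are the left injections. -/
def AltIsS {CS CD : Type} : CS ⊕ CD → Prop := fun c => c.isLeft = true

/-- The winning region of Spoiler in the alternating game. -/
def SpoilerRegion {CS CD : Type} (mS : CS → CD → Prop) (mD : CD → CS → Prop) :
    Set CS :=
  {s | ∃ π, SpoilerWinsFrom (AltMove mS mD) AltIsS π (Sum.inl s)}

/-- The winning region of Duplicator in the alternating game. -/
def DuplicatorRegion {CS CD : Type} (mS : CS → CD → Prop) (mD : CD → CS → Prop) :
    Set CS :=
  {s | ∃ ρ, DuplicatorWinsFrom (AltMove mS mD) AltIsS ρ (Sum.inl s)}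

/-- Configurations of the branching bisimulation game: Spoiler configurations are
pairs `[x,y]` and quintuples `[x,x',y,y',y'']`; Duplicator configurations are
tuples `⟨x,α,x',y⟩`. -/
inductive BConf (X A : Type) where
  | pair : X → X → BConf X A
  | quint : X → X → X → X → X → BConf X A
  | dup : X → A → X → X → BConf X A

/-- Spoiler owns the pair and quintuple configurations. -/
def BIsS {X A : Type} : BConf X A → Prop
  | BConf.dup _ _ _ _ => False
  | _ => True

/-- Moves of the branching bisimulation game. -/
inductive BMove {X A : Type} (tr : X → A → X → Prop) (τ : A) :
    BConf X A → BConf X A → Prop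
  | s1l {x y α x'} : tr x α x' → BMove tr τ (BConf.pair x y) (BConf.dup x α x' y)
  | s1r {x y α y'} : tr y α y' → BMove tr τ (BConf.pair x y) (BConf.dup y α y' x)
  | s2a {x x' y y' y''} : BMove tr τ (BConf.quint x x' y y' y'') (BConf.pair x y')
  | s2b {x x' y y' y''} : BMove tr τ (BConf.quint x x' y y' y'') (BConf.pair x' y'')
  | d {x α x' y y' y''} : TauStar tr τ y y' → TrOpt tr τ y' α y'' →
      BMove tr τ (BConf.dup x α x' y) (BConf.quint x x' y y' y'')

/-- The winning region of Spoiler in the branching bisimulation game, restricted to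
pair configurations. -/
def BSpoilerRegion {X A : Type} (tr : X → A → X → Prop) (τ : A) : Set (X × X) :=
  {p | ∃ π, SpoilerWinsFrom (BMove tr τ) BIsS π (BConf.pair p.1 p.2)}
namespace BApartAux

open Classical

variable {X A : Type}

@[simp] lemma bisS_pair (u v : X) : BIsS (A := A) (BConf.pair u v) := trivial
@[simp] lemma bisS_quint (u u' v v' v'' : X) :
    BIsS (A := A) (BConf.quint u u' v v' v'') := trivial
@[simp] lemma bisS_dup (u : X) (α : A) (w v : X) :
    ¬ BIsS (BConf.dup u α w v) := fun h => h

section Apart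

variable (tr : X → A → X → Prop) (τ : A)

/-- The key one-round condition: every Duplicator answer to the challenge
`u -α→ w` (from `v`) lands in `R` on one of the two sides. -/
def R0 (R : X → X → Prop) (u : X) (α : A) (w v : X) : Prop :=
  ∀ v' v'', TauStar tr τ v v' → TrOpt tr τ v' α v'' → R u v' ∨ R w v''

def FStep (R : X → X → Prop) (u v : X) : Prop :=
  ∃ p : A × X, tr u p.1 p.2 ∧ R0 tr τ R u p.1 p.2 v

/-- Finite approximants of branching apartness. -/
def ApartN : ℕ → X → X → Prop
  | 0, _, _ => False
  | n+1, u, v => ApartN n u v ∨ FStep tr τ (ApartN n) u v ∨ FStep tr τ (ApartN n) v u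

lemma apartN_succ_of (n : ℕ) {u v : X} (h : ApartN tr τ n u v) :
    ApartN tr τ (n+1) u v := Or.inl h

lemma apartN_mono {k m : ℕ} (hkm : k ≤ m) {u v : X} (h : ApartN tr τ k u v) :
    ApartN tr τ m u v := by
  induction hkm with
  | refl => exact h
  | step _ ih => exact Or.inl ih

lemma apartN_symm : ∀ {n : ℕ} {u v : X}, ApartN tr τ n u v → ApartN tr τ n v u := by
  intro n
  induction n with
  | zero => exact fun h => h.elim
  | succ n ih =>
    rintro u v (h | h | h)
    · exact Or.inl (ih h)
    · exact Or.inr (Or.inr h)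
    · exact Or.inr (Or.inl h)

lemma branchingApart_iff_exists [Finite X] (x y : X) :
    BranchingApart tr τ x y ↔ ∃ n, ApartN tr τ n x y := by
  constructor
  · intro h
    apply h
    constructor
    · intro u v ⟨n, hn⟩
      exact ⟨n, apartN_symm tr τ hn⟩
    · intro u v α u' htr hresp
      letI : Fintype X := Fintype.ofFinite X
      set f : X × X → ℕ :=
        fun p => sInf {n | ApartN tr τ n u p.1} ⊔ sInf {n | ApartN tr τ n u' p.2} with hf
      set N : ℕ := Finset.univ.sup f with hN
      refine ⟨N + 1, Or.inr (Or.inl ⟨(α, u'), htr, ?_⟩)⟩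
      intro v' v'' hts hto
      rcases hresp v' v'' hts hto with ⟨n, hn⟩ | ⟨n, hn⟩
      · left
        have hne : {n | ApartN tr τ n u v'}.Nonempty := ⟨n, hn⟩
        refine apartN_mono tr τ ?_ (Nat.sInf_mem hne)
        calc sInf {n | ApartN tr τ n u v'} ≤ f (v', v'') := le_sup_left
          _ ≤ N := Finset.le_sup (Finset.mem_univ _)
      · right
        have hne : {n | ApartN tr τ n u' v''}.Nonempty := ⟨n, hn⟩
        refine apartN_mono tr τ ?_ (Nat.sInf_mem hne)
        calc sInf {n | ApartN tr τ n u' v''} ≤ f (v', v'') := le_sup_right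
          _ ≤ N := Finset.le_sup (Finset.mem_univ _)
  · rintro ⟨n, hn⟩ R hR
    induction n generalizing x y with
    | zero => exact hn.elim
    | succ n ih =>
      rcases hn with h | ⟨⟨α, x'⟩, htr, hresp⟩ | ⟨⟨α, y'⟩, htr, hresp⟩
      · exact ih x y h
      · exact hR.2 x y α x' htr fun y' y'' hts hto =>
          (hresp y' y'' hts hto).imp (ih x y') (ih x' y'')
      · exact hR.1 (hR.2 y x α y' htr fun x' x'' hts hto =>
          (hresp x' x'' hts hto).imp (ih y x') (ih y' x''))

end Apart

end BApartAux
namespace BApartAux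

section Strat

open scoped Classical

variable (tr : X → A → X → Prop) (τ : A)

/-- Rank of an apart pair. -/
noncomputable def rk (u v : X) : ℕ := sInf {n | ApartN tr τ n u v}

/-- The set of "levels" that make a configuration good for Spoiler. -/
def KS : BConf X A → Set ℕ
  | BConf.pair u v => {n | ApartN tr τ n u v}
  | BConf.quint u u' _ v' v'' => {k | ApartN tr τ k u v'} ∪ {k | ApartN tr τ k u' v''}
  | BConf.dup u α w v => {k | R0 tr τ (ApartN tr τ k) u α w v}

def good (c : BConf X A) : Prop := (KS tr τ c).Nonempty

def off : BConf X A → ℕ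
  | BConf.pair _ _ => 0
  | BConf.quint _ _ _ _ _ => 1
  | BConf.dup _ _ _ _ => 2

/-- The measure that decreases along plays consistent with Spoiler's strategy. -/
noncomputable def mm (c : BConf X A) : ℕ := 3 * sInf (KS tr τ c) + off c

/-- Spoiler's positional strategy. -/
noncomputable def spi : BConf X A → BConf X A := fun c =>
  match c with
  | BConf.pair u v =>
    if h : FStep tr τ (ApartN tr τ (rk tr τ u v - 1)) u v
    then BConf.dup u h.choose.1 h.choose.2 v
    else if h' : FStep tr τ (ApartN tr τ (rk tr τ u v - 1)) v u
    then BConf.dup v h'.choose.1 h'.choose.2 u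
    else if h'' : ∃ c', BMove tr τ (BConf.pair u v) c' then h''.choose
    else BConf.pair u v
  | BConf.quint u u' _ v' v'' =>
    if ApartN tr τ (sInf ({k | ApartN tr τ k u v'} ∪ {k | ApartN tr τ k u' v''})) u v'
    then BConf.pair u v'
    else BConf.pair u' v''
  | BConf.dup u _ _ _ => BConf.pair u u

lemma good_pair_cases {u v : X} (hg : good tr τ (BConf.pair u v)) :
    ∃ m, rk tr τ u v = m + 1 ∧
      (FStep tr τ (ApartN tr τ m) u v ∨ FStep tr τ (ApartN tr τ m) v u) := by
  have hn : ApartN tr τ (rk tr τ u v) u v := Nat.sInf_mem hg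
  rcases hrk : rk tr τ u v with _ | m
  · rw [hrk] at hn; exact hn.elim
  · rw [hrk] at hn
    rcases hn with h | h | h
    · exact absurd h (Nat.notMem_of_lt_sInf (show m < rk tr τ u v by omega))
    · exact ⟨m, rfl, Or.inl h⟩
    · exact ⟨m, rfl, Or.inr h⟩

end Strat

end BApartAux
namespace BApartAux

section Strat2

open scoped Classical

variable (tr : X → A → X → Prop) (τ : A)

lemma good_step {c c' : BConf X A} (hg : good tr τ c)
    (hs : ConsStep (BMove tr τ) BIsS (spi tr τ) c c') :
    good tr τ c' ∧ mm tr τ c' < mm tr τ c := by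
  obtain ⟨hmv, hown⟩ := hs
  cases c with
  | pair u v =>
    have hc' : c' = spi tr τ (BConf.pair u v) := hown (bisS_pair u v)
    obtain ⟨m, hm, hd⟩ := good_pair_cases tr τ hg
    have hm1 : rk tr τ u v - 1 = m := by omega
    have erk : sInf {n | ApartN tr τ n u v} = m + 1 := hm
    by_cases h1 : FStep tr τ (ApartN tr τ (rk tr τ u v - 1)) u v
    · have hc2 : c' = BConf.dup u h1.choose.1 h1.choose.2 v := by
        rw [hc']; simp only [spi]; rw [dif_pos h1]
      obtain ⟨htr2, hR0⟩ := h1.choose_spec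
      subst hc2
      refine ⟨⟨rk tr τ u v - 1, hR0⟩, ?_⟩
      have hle : sInf {k | R0 tr τ (ApartN tr τ k) u (Exists.choose h1).1 (Exists.choose h1).2 v} ≤
        rk tr τ u v - 1 := Nat.sInf_le hR0
      simp only [mm, KS, off]
      omega
    · have h2 : FStep tr τ (ApartN tr τ (rk tr τ u v - 1)) v u := by
        rw [hm1]
        rcases hd with h | h
        · exact absurd (by rw [hm1]; exact h) h1
        · exact h
      have hc2 : c' = BConf.dup v h2.choose.1 h2.choose.2 u := by
        rw [hc']; simp only [spi]; rw [dif_neg h1, dif_pos h2]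
      obtain ⟨htr2, hR0⟩ := h2.choose_spec
      subst hc2
      refine ⟨⟨rk tr τ u v - 1, hR0⟩, ?_⟩
      have hle : sInf {k | R0 tr τ (ApartN tr τ k) v (Exists.choose h2).1 (Exists.choose h2).2 u} ≤
        rk tr τ u v - 1 := Nat.sInf_le hR0
      simp only [mm, KS, off]
      omega
  | quint u u' v v' v'' =>
    have hc' : c' = spi tr τ (BConf.quint u u' v v' v'') := hown (bisS_quint u u' v v' v'')
    have hmem : sInf ({k | ApartN tr τ k u v'} ∪ {k | ApartN tr τ k u' v''}) ∈
        ({k | ApartN tr τ k u v'} ∪ {k | ApartN tr τ k u' v''}) := Nat.sInf_mem hg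
    by_cases hA : ApartN tr τ (sInf ({k | ApartN tr τ k u v'} ∪ {k | ApartN tr τ k u' v''})) u v'
    · have hc2 : c' = BConf.pair u v' := by
        rw [hc']; simp only [spi]; rw [if_pos hA]
      subst hc2
      refine ⟨⟨_, hA⟩, ?_⟩
      have hle : sInf {n | ApartN tr τ n u v'} ≤
          sInf ({k | ApartN tr τ k u v'} ∪ {k | ApartN tr τ k u' v''}) := Nat.sInf_le hA
      simp only [mm, KS, off]
      omega
    · have hB : ApartN tr τ (sInf ({k | ApartN tr τ k u v'} ∪ {k | ApartN tr τ k u' v''})) u' v'' := by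
        rcases hmem with h | h
        · exact absurd h hA
        · exact h
      have hc2 : c' = BConf.pair u' v'' := by
        rw [hc']; simp only [spi]; rw [if_neg hA]
      subst hc2
      refine ⟨⟨_, hB⟩, ?_⟩
      have hle : sInf {n | ApartN tr τ n u' v''} ≤
          sInf ({k | ApartN tr τ k u v'} ∪ {k | ApartN tr τ k u' v''}) := Nat.sInf_le hB
      simp only [mm, KS, off]
      omega
  | dup u α w v =>
    have hk : R0 tr τ (ApartN tr τ (sInf {k | R0 tr τ (ApartN tr τ k) u α w v})) u α w v :=
      Nat.sInf_mem hg
    cases hmv with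
    | d hts hto =>
      rename_i y' y''
      have h := hk y' y'' hts hto
      have hmem : sInf {k | R0 tr τ (ApartN tr τ k) u α w v} ∈
          ({k | ApartN tr τ k u y'} ∪ {k | ApartN tr τ k w y''}) := h
      refine ⟨⟨_, hmem⟩, ?_⟩
      have hle := Nat.sInf_le hmem
      simp only [mm, KS, off]
      omega

end Strat2

end BApartAux
namespace BApartAux

section Strat3

open scoped Classical

variable (tr : X → A → X → Prop) (τ : A)

lemma spi_move {c : BConf X A} (hg : good tr τ c) (hS : BIsS c) :
    BMove tr τ c (spi tr τ c) := by
  cases c with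
  | pair u v =>
    obtain ⟨m, hm, hd⟩ := good_pair_cases tr τ hg
    have hm1 : rk tr τ u v - 1 = m := by omega
    by_cases h1 : FStep tr τ (ApartN tr τ (rk tr τ u v - 1)) u v
    · have : spi tr τ (BConf.pair u v) = BConf.dup u h1.choose.1 h1.choose.2 v := by
        simp only [spi]; rw [dif_pos h1]
      rw [this]
      exact BMove.s1l h1.choose_spec.1
    · have h2 : FStep tr τ (ApartN tr τ (rk tr τ u v - 1)) v u := by
        rw [hm1]
        rcases hd with h | h
        · exact absurd (by rw [hm1]; exact h) h1
        · exact h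
      have : spi tr τ (BConf.pair u v) = BConf.dup v h2.choose.1 h2.choose.2 u := by
        simp only [spi]; rw [dif_neg h1, dif_pos h2]
      rw [this]
      exact BMove.s1r h2.choose_spec.1
  | quint u u' v v' v'' =>
    by_cases hA : ApartN tr τ (sInf ({k | ApartN tr τ k u v'} ∪ {k | ApartN tr τ k u' v''})) u v'
    · have : spi tr τ (BConf.quint u u' v v' v'') = BConf.pair u v' := by
        simp only [spi]; rw [if_pos hA]
      rw [this]; exact BMove.s2a
    · have : spi tr τ (BConf.quint u u' v v' v'') = BConf.pair u' v'' := by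
        simp only [spi]; rw [if_neg hA]
      rw [this]; exact BMove.s2b
  | dup u α w v => exact absurd hS (bisS_dup u α w v)

lemma spi_valid : ValidStrat (BMove tr τ) BIsS (spi tr τ) := by
  intro c hS hex
  cases c with
  | pair u v =>
    by_cases h1 : FStep tr τ (ApartN tr τ (rk tr τ u v - 1)) u v
    · have : spi tr τ (BConf.pair u v) = BConf.dup u h1.choose.1 h1.choose.2 v := by
        simp only [spi]; rw [dif_pos h1]
      rw [this]; exact BMove.s1l h1.choose_spec.1
    · by_cases h2 : FStep tr τ (ApartN tr τ (rk tr τ u v - 1)) v u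
      · have : spi tr τ (BConf.pair u v) = BConf.dup v h2.choose.1 h2.choose.2 u := by
          simp only [spi]; rw [dif_neg h1, dif_pos h2]
        rw [this]; exact BMove.s1r h2.choose_spec.1
      · have : spi tr τ (BConf.pair u v) = hex.choose := by
          simp only [spi]; rw [dif_neg h1, dif_neg h2, dif_pos hex]
        rw [this]; exact hex.choose_spec
  | quint u u' v v' v'' =>
    by_cases hA : ApartN tr τ (sInf ({k | ApartN tr τ k u v'} ∪ {k | ApartN tr τ k u' v''})) u v'
    · have : spi tr τ (BConf.quint u u' v v' v'') = BConf.pair u v' := by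
        simp only [spi]; rw [if_pos hA]
      rw [this]; exact BMove.s2a
    · have : spi tr τ (BConf.quint u u' v v' v'') = BConf.pair u' v'' := by
        simp only [spi]; rw [if_neg hA]
      rw [this]; exact BMove.s2b
  | dup u α w v => exact absurd hS (bisS_dup u α w v)

end Strat3

/-- A chain built from the first `n` steps of a function, with its last element. -/
lemma chain_range {C : Type} (S : C → C → Prop) :
    ∀ (n : ℕ) (g : ℕ → C), (∀ i < n, S (g i) (g (i+1))) →
      List.Chain S (g 0) ((List.range n).map fun i => g (i+1)) ∧
      ((g 0 :: (List.range n).map fun i => g (i+1)).getLast (by simp)) = g n := by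
  intro n
  induction n with
  | zero => intro g _; simp [List.Chain]
  | succ n ih =>
    intro g hg
    have e : (List.range (n+1)).map (fun i => g (i+1)) =
        g 1 :: (List.range n).map fun i => (fun j => g (j+1)) (i+1) := by
      rw [List.range_succ_eq_map, List.map_cons, List.map_map]
      rfl
    obtain ⟨hch, hl⟩ := ih (fun j => g (j+1)) (fun i hi => hg (i+1) (by omega))
    rw [e]
    constructor
    · exact List.Chain.cons (hg 0 (by omega)) hch
    · rw [List.getLast_cons]
      exact hl

lemma good_getLast {C : Type} {S : C → C → Prop} {G : C → Prop}
    (hpres : ∀ a b, G a → S a b → G b) :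
    ∀ (l : List C) (c : C), G c → List.Chain S c l →
      G ((c :: l).getLast (List.cons_ne_nil c l)) := by
  intro l
  induction l with
  | nil => intro c hc _; exact hc
  | cons b l ih =>
    intro c hc hch
    rw [List.Chain, List.isChain_cons_cons] at hch
    have := ih b (hpres c b hc hch.1) hch.2
    rwa [List.getLast_cons (List.cons_ne_nil b l)]

end BApartAux
namespace BApartAux

section Forward

open scoped Classical

variable (tr : X → A → X → Prop) (τ : A)

lemma spoiler_wins_of_good {x y : X} (hg : good tr τ (BConf.pair x y)) :
    SpoilerWinsFrom (BMove tr τ) BIsS (spi tr τ) (BConf.pair x y) := by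
  refine ⟨spi_valid tr τ, ?_, ?_⟩
  · rintro f ⟨hf0, hstep⟩
    have hgood : ∀ i, good tr τ (f i) := by
      intro i
      induction i with
      | zero => rw [hf0]; exact hg
      | succ i ih => exact (good_step tr τ ih (hstep i)).1
    have hdec : ∀ i, mm tr τ (f (i+1)) < mm tr τ (f i) :=
      fun i => (good_step tr τ (hgood i) (hstep i)).2
    have hbound : ∀ i, mm tr τ (f i) + i ≤ mm tr τ (f 0) := by
      intro i
      induction i with
      | zero => omega
      | succ i ih => have := hdec i; omega
    have := hbound (mm tr τ (f 0) + 1)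
    omega
  · rintro l ⟨hch, hstuck⟩
    have hlast : good tr τ ((BConf.pair x y :: l).getLast (List.cons_ne_nil _ l)) :=
      good_getLast (G := good tr τ) (fun a b ha hab => (good_step tr τ ha hab).1) l (BConf.pair x y) hg hch
    intro hS
    exact hstuck _ ⟨spi_move tr τ hlast hS, fun _ => rfl⟩

end Forward

section Backward

open scoped Classical

variable (tr : X → A → X → Prop) (τ : A) (R : X → X → Prop)

/-- Duplicator's invariant: configurations compatible with non-apartness. -/
def Good2 : BConf X A → Prop
  | BConf.pair u v => ¬ R u v
  | BConf.quint u u' _ v' v'' => ¬ R u v' ∧ ¬ R u' v''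
  | BConf.dup u α w v => ¬ R u v ∧ tr u α w

lemma good2_step (hsym : Symmetric R) {c c' : BConf X A}
    (hg : Good2 tr R c) (hS : BIsS c) (hmv : BMove tr τ c c') : Good2 tr R c' := by
  cases hmv with
  | s1l htr => exact ⟨hg, htr⟩
  | s1r htr => exact ⟨fun hr => hg (hsym hr), htr⟩
  | s2a => exact hg.1
  | s2b => exact hg.2
  | d hts hto => exact absurd hS (by exact fun h => h)

lemma good2_dup_move (hAp : IsBranchingApartnessRel tr τ R) {u : X} {α : A} {w v : X}
    (hg : Good2 tr R (BConf.dup u α w v)) :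
    ∃ c', BMove tr τ (BConf.dup u α w v) c' ∧ Good2 tr R c' := by
  obtain ⟨hnr, htr⟩ := hg
  have hex : ∃ v' v'', TauStar tr τ v v' ∧ TrOpt tr τ v' α v'' ∧ ¬R u v' ∧ ¬R w v'' := by
    by_contra hno
    refine hnr (hAp.2 u v α w htr fun v' v'' hts hto => ?_)
    by_cases h1 : R u v'
    · exact Or.inl h1
    · by_cases h2 : R w v''
      · exact Or.inr h2
      · exact absurd ⟨v', v'', hts, hto, h1, h2⟩ hno
  obtain ⟨v', v'', hts, hto, h1, h2⟩ := hex
  exact ⟨BConf.quint u w v v' v'', BMove.d hts hto, h1, h2⟩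

/-- Duplicator's counter-play against the positional strategy `π`. -/
noncomputable def dupPlay (π : BConf X A → BConf X A) (c0 : BConf X A) : ℕ → BConf X A
  | 0 => c0
  | n+1 =>
    if h : ∃ c', ConsStep (BMove tr τ) BIsS π (dupPlay π c0 n) c' ∧ Good2 tr R c'
    then h.choose else dupPlay π c0 n

end Backward

end BApartAux
namespace BApartAux

section Backward2

variable (tr : X → A → X → Prop) (τ : A) (R : X → X → Prop)

lemma apart_of_spoiler_wins {x y : X} {π : BConf X A → BConf X A}
    (hw : SpoilerWinsFrom (BMove tr τ) BIsS π (BConf.pair x y))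
    (hAp : IsBranchingApartnessRel tr τ R) : R x y := by
  classical
  by_contra hRxy
  obtain ⟨hvalid, hnoInf, hend⟩ := hw
  set g : ℕ → BConf X A := dupPlay tr τ R π (BConf.pair x y) with hgdef
  have hsucc : ∀ n (h : ∃ c', ConsStep (BMove tr τ) BIsS π (g n) c' ∧ Good2 tr R c'),
      ConsStep (BMove tr τ) BIsS π (g n) (g (n+1)) ∧ Good2 tr R (g (n+1)) := by
    intro n h
    have e : g (n+1) = h.choose := dif_pos h
    rw [e]; exact h.choose_spec
  by_cases hall : ∀ n, ∃ c', ConsStep (BMove tr τ) BIsS π (g n) c' ∧ Good2 tr R c'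
  · exact hnoInf g ⟨rfl, fun i => (hsucc i (hall i)).1⟩
  · push_neg at hall
    obtain ⟨n0, hn0⟩ := hall
    have hex : ∃ n, ¬ ∃ c', ConsStep (BMove tr τ) BIsS π (g n) c' ∧ Good2 tr R c' :=
      ⟨n0, fun h => hn0 h.choose h.choose_spec.1 h.choose_spec.2⟩
    set n := Nat.find hex with hndef
    have hfind : ¬ ∃ c', ConsStep (BMove tr τ) BIsS π (g n) c' ∧ Good2 tr R c' :=
      Nat.find_spec hex
    have hlt : ∀ i, i < n → ∃ c', ConsStep (BMove tr τ) BIsS π (g i) c' ∧ Good2 tr R c' :=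
      fun i hi => not_not.1 (Nat.find_min hex hi)
    have hsteps : ∀ i, i < n → ConsStep (BMove tr τ) BIsS π (g i) (g (i+1)) :=
      fun i hi => (hsucc i (hlt i hi)).1
    have hgood : Good2 tr R (g n) := by
      rcases Nat.eq_zero_or_pos n with hz | hp
      · rw [hz]; exact hRxy
      · obtain ⟨k, hk⟩ : ∃ k, n = k + 1 := ⟨n - 1, by omega⟩
        have h := hlt k (by omega)
        have e : g (k+1) = h.choose := dif_pos h
        rw [hk, e]
        exact h.choose_spec.2
    have hBIsS : BIsS (g n) := by
      by_contra hnS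
      cases hgn : g n with
      | pair u v => rw [hgn] at hnS; exact hnS (bisS_pair u v)
      | quint u u' v v' v'' => rw [hgn] at hnS; exact hnS (bisS_quint u u' v v' v'')
      | dup u α w v =>
        rw [hgn] at hgood hfind
        obtain ⟨c'', hmv, hg2⟩ := good2_dup_move tr τ R hAp hgood
        exact hfind ⟨c'', ⟨hmv, fun hS => absurd hS (bisS_dup u α w v)⟩, hg2⟩
    have hstuck : ∀ c', ¬ ConsStep (BMove tr τ) BIsS π (g n) c' := by
      intro c' hcs
      exact hfind ⟨c', hcs, good2_step tr τ R hAp.1 hgood hBIsS hcs.1⟩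
    obtain ⟨hch, hl⟩ := chain_range (ConsStep (BMove tr τ) BIsS π) n g hsteps
    have hg0 : g 0 = BConf.pair x y := rfl
    have hlast : ((BConf.pair x y :: (List.range n).map fun i => g (i+1)).getLast
        (List.cons_ne_nil _ _)) = g n := hl
    have hmax : MaxFinPlay (ConsStep (BMove tr τ) BIsS π) (BConf.pair x y)
        ((List.range n).map fun i => g (i+1)) := by
      constructor
      · exact hch
      · rw [hlast]; exact hstuck
    have hlose := hend _ hmax
    rw [hlast] at hlose
    exact hlose hBIsS

end Backward2

end BApartAux

/-- For a finite LTS, `x` and `y` are branching apart iff `[x,y]` is winning for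
Spoiler in the branching bisimulation game. -/
theorem branchingApart_iff_spoiler_wins {X A : Type} [Finite X]
    (tr : X → A → X → Prop) (τ : A) (x y : X) :
    BranchingApart tr τ x y ↔ (x, y) ∈ BSpoilerRegion tr τ := by
  constructor
  · intro h
    have hg : BApartAux.good tr τ (BConf.pair x y) :=
      (BApartAux.branchingApart_iff_exists tr τ x y).1 h
    exact ⟨BApartAux.spi tr τ, BApartAux.spoiler_wins_of_good tr τ hg⟩
  · rintro ⟨π, hw⟩ R hR
    exact BApartAux.apart_of_spoiler_wins tr τ R hw hR
end
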